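/- arXiv:1609.02858 — 3 statements merged into one kernel-verified Lean document; each statement's English description precedes it below -/
import Mathlib

section
/- Let F be a cyclic cubic field and let u = (e^x, e^y, e^z) with x + y + z = 0 and ‖w‖² = x² + y² + z² > 0, where w = (−x,−y,−z). Then for every f ∈ O_F one has G(u,f) ≤ 4π²‖f²‖² e^{−π‖f‖²} (1 + (1/2)e^{2π‖w‖·‖f²‖}), where ‖f²‖² = f₀⁴ + f₁⁴ + f₂⁴. In particular, if f ∈ O_F satisfies ‖f‖² ≥ 9, then G(u,f) ≤ 4π² ( e^{−(π − 1/2)‖f‖²} + (1/2) e^{−π(1 − 2‖w‖ − 1/(2π))‖f‖²} ). -/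
open NumberField
open scoped nonZeroDivisors

/-- `‖uf‖² = u₀²f₀² + u₁²f₁² + u₂²f₂²` where `fᵢ = ι(σ^i f)`. -/
noncomputable def unorm2 {F : Type*} [Field F] [Algebra ℚ F] (σ : F ≃ₐ[ℚ] F) (ι : F →+* ℝ)
    (u : Fin 3 → ℝ) (f : F) : ℝ :=
  (u 0) ^ 2 * (ι f) ^ 2 + (u 1) ^ 2 * (ι (σ f)) ^ 2 + (u 2) ^ 2 * (ι (σ (σ f))) ^ 2

/-- `‖f‖² = f₀² + f₁² + f₂²` where `fᵢ = ι(σ^i f)`. -/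
noncomputable def fnorm2 {F : Type*} [Field F] [Algebra ℚ F] (σ : F ≃ₐ[ℚ] F) (ι : F →+* ℝ)
    (f : F) : ℝ :=
  (ι f) ^ 2 + (ι (σ f)) ^ 2 + (ι (σ (σ f))) ^ 2

/-- `k⁰(S, u) = ∑_{f ∈ S} exp(−π‖uf‖²)`. -/
noncomputable def k0 {F : Type*} [Field F] [Algebra ℚ F] (σ : F ≃ₐ[ℚ] F) (ι : F →+* ℝ)
    (S : Set F) (u : Fin 3 → ℝ) : ℝ :=
  ∑' g : S, Real.exp (-Real.pi * unorm2 σ ι u (g : F))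

/-- `G₁(u,f) = exp(−π(‖uf‖² − ‖f‖²)) − 1`. -/
noncomputable def G1 {F : Type*} [Field F] [Algebra ℚ F] (σ : F ≃ₐ[ℚ] F) (ι : F →+* ℝ)
    (u : Fin 3 → ℝ) (f : F) : ℝ :=
  Real.exp (-Real.pi * (unorm2 σ ι u f - fnorm2 σ ι f)) - 1

/-- `G₂(u,f) = G₁(u,f) + G₁(u,σf) + G₁(u,σ²f)`. -/
noncomputable def G2 {F : Type*} [Field F] [Algebra ℚ F] (σ : F ≃ₐ[ℚ] F) (ι : F →+* ℝ)
    (u : Fin 3 → ℝ) (f : F) : ℝ :=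
  G1 σ ι u f + G1 σ ι u (σ f) + G1 σ ι u (σ (σ f))

/-- For `u = (e^x, e^y, e^z)` and `w = (−x,−y,−z)`,
`G(u,f) = e^{−π‖f‖²} G₂(u,f) / ‖w‖²`. -/
noncomputable def Gfun {F : Type*} [Field F] [Algebra ℚ F] (σ : F ≃ₐ[ℚ] F) (ι : F →+* ℝ)
    (x y z : ℝ) (f : F) : ℝ :=
  Real.exp (-Real.pi * fnorm2 σ ι f) *
    G2 σ ι ![Real.exp x, Real.exp y, Real.exp z] f / (x ^ 2 + y ^ 2 + z ^ 2)

-- ===== auxiliary lemmas =====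
set_option maxHeartbeats 1000000

/-- For `t ≥ 0`, `e^{-t} ≤ 1 - t + t²/2`. -/
lemma exp_neg_le_quadratic {t : ℝ} (ht : 0 ≤ t) : Real.exp (-t) ≤ 1 - t + t ^ 2 / 2 := by
  have h1 : 1 + t + t ^ 2 / 2 ≤ Real.exp t := Real.quadratic_le_exp_of_nonneg ht
  have h2 : 0 < 1 + t + t ^ 2 / 2 := by nlinarith
  have h3 : Real.exp (-t) = 1 / Real.exp t := by rw [Real.exp_neg]; ring
  have h4 : 0 < 1 - t + t ^ 2 / 2 := by nlinarith [sq_nonneg (t - 1)]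
  rw [h3, div_le_iff₀ (Real.exp_pos t)]
  nlinarith [mul_le_mul_of_nonneg_left h1 h4.le]

/-- For `w ≥ 0`, `e^w - 1 - w ≤ (w²/2) e^w`. -/
lemma exp_sub_linear_le {w : ℝ} (hw : 0 ≤ w) :
    Real.exp w - 1 - w ≤ w ^ 2 / 2 * Real.exp w := by
  rcases le_or_gt w 1 with h1 | h1
  · -- use exp_bound' with n = 3
    have hb := Real.exp_bound' hw h1 (n := 3) (by norm_num)
    have : Real.exp w ≤ 1 + w + w ^ 2 / 2 + w ^ 3 * (2/9) := by
      rw [Finset.sum_range_succ, Finset.sum_range_succ, Finset.sum_range_succ,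
        Finset.sum_range_zero] at hb
      norm_num [Nat.factorial] at hb ⊢
      linarith
    have hew : 1 + w ≤ Real.exp w := by linarith [Real.add_one_le_exp w]
    nlinarith [sq_nonneg w, mul_nonneg (mul_nonneg hw hw) hw]
  · -- w > 1 : use e^{-w} ≥ (1 - w/2)² and algebra
    rcases le_or_gt w 2 with h2 | h2
    · have hl : 1 - w / 2 ≤ Real.exp (-(w/2)) := Real.one_sub_le_exp_neg (w/2)
      have hge : (1 - w / 2) ^ 2 ≤ Real.exp (-w) := by
        have hnn : 0 ≤ 1 - w / 2 := by linarith
        calc (1 - w/2)^2 ≤ Real.exp (-(w/2)) ^ 2 := by nlinarith [Real.exp_pos (-(w/2))]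
        _ = Real.exp (-w) := by rw [← Real.exp_nat_mul]; norm_num; ring_nf
      -- (1+w)(1-w/2)² ≥ 1 - w²/2  for  w ≥ 1
      have hkey : 1 - w ^ 2 / 2 ≤ (1 + w) * Real.exp (-w) := by
        nlinarith [hge, sq_nonneg (1 - w/2)]
      have hme : Real.exp (-w) * Real.exp w = 1 := by
        rw [← Real.exp_add]; simp
      nlinarith [Real.exp_pos w, Real.exp_pos (-w)]
    · -- w > 2 : 1 - w²/2 < 0
      have hme : Real.exp (-w) * Real.exp w = 1 := by rw [← Real.exp_add]; simp
      have h0 : 0 < Real.exp (-w) := Real.exp_pos _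
      nlinarith [Real.exp_pos w, (Real.add_one_le_exp w)]

/-- Unified remainder bound: if `-t ≤ m` and `0 ≤ m` then `e^{-t} - 1 + t ≤ (t²/2) e^m`. -/
lemma exp_remainder_le {t m : ℝ} (hm : 0 ≤ m) (h : -t ≤ m) :
    Real.exp (-t) - 1 + t ≤ t ^ 2 / 2 * Real.exp m := by
  rcases le_or_gt 0 t with ht | ht
  · have h1 := exp_neg_le_quadratic ht
    have h2 : (1:ℝ) ≤ Real.exp m := Real.one_le_exp hm
    nlinarith [sq_nonneg t]
  · have hw : 0 ≤ -t := by linarith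
    have h1 := exp_sub_linear_le hw
    have h2 : Real.exp (-t) ≤ Real.exp m := Real.exp_le_exp.mpr h
    have h3 : 0 ≤ (-t)^2/2 := by positivity
    calc Real.exp (-t) - 1 + t = Real.exp (-t) - 1 - (-t) := by ring
    _ ≤ (-t)^2/2 * Real.exp (-t) := by simpa using h1
    _ ≤ (-t)^2/2 * Real.exp m := by nlinarith
    _ = t^2/2 * Real.exp m := by ring

/-- AM–GM for three nonnegative reals, cube form. -/
lemma amgm3 {p q r : ℝ} (hp : 0 ≤ p) (hq : 0 ≤ q) (hr : 0 ≤ r) :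
    27 * (p * q * r) ≤ (p + q + r) ^ 3 := by
  nlinarith [sq_nonneg (p - q), sq_nonneg (q - r), sq_nonneg (p - r), sq_nonneg (p + q + r),
    mul_nonneg hp hq, mul_nonneg hq hr, mul_nonneg hp hr,
    mul_nonneg (mul_nonneg hp hq) hr]

lemma exp_taylor2 {t : ℝ} (h : |t| ≤ 1) : |Real.exp t - 1 - t| ≤ (3/4) * t ^ 2 := by
  have hb := Real.exp_bound h (n := 2) (by norm_num)
  rw [Finset.sum_range_succ, Finset.sum_range_succ, Finset.sum_range_zero] at hb
  norm_num [Nat.factorial] at hb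
  calc |Real.exp t - 1 - t| = |Real.exp t - (1 + t)| := by ring_nf
  _ ≤ t ^ 2 * (3/4) := hb
  _ = (3/4) * t ^ 2 := by ring

-- bound on |a| where a = e^{2u} - 1, given |u| ≤ W small
lemma sq_exp_aux {u V : ℝ} (hV0 : 0 ≤ V) (hu : u ^ 2 ≤ V ^ 2) (hV : V ≤ 1/4) :
    (Real.exp (2*u) - 1) ^ 2 ≤ 4 * u ^ 2 * (1 + 1.5 * V) ^ 2 := by
  obtain ⟨huV1, huV2⟩ := abs_le_of_sq_le_sq' hu hV0
  have h2u : |2*u| ≤ 1 := by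
    rw [abs_le]; constructor <;> nlinarith
  have hb := exp_taylor2 h2u
  rw [abs_le] at hb
  have hd1 : Real.exp (2*u) - 1 - 2*u ≤ 3 * u ^ 2 := by nlinarith [hb.2]
  have hd2 : -(3 * u ^ 2) ≤ Real.exp (2*u) - 1 - 2*u := by nlinarith [hb.1]
  set d := Real.exp (2*u) - 1 - 2*u with hd
  have hsq : d ^ 2 ≤ 9 * u ^ 4 := by nlinarith [hd1, hd2]
  have hud : u * d ≤ 3 * V * u ^ 2 := by
    nlinarith [mul_nonneg (sub_nonneg.2 huV2) (sub_nonneg.2 hd1),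
      mul_nonneg (sub_nonneg.2 (neg_le.1 huV1)) (sub_nonneg.2 (neg_le.1 hd2))]
  have hu4 : u ^ 4 ≤ u ^ 2 * V ^ 2 := by nlinarith [sq_nonneg u]
  have : Real.exp (2*u) - 1 = 2*u + d := by rw [hd]; ring
  rw [this]
  nlinarith [hsq, hud, hu4]


lemma one_le_sq {t : ℝ} (h : 1 ≤ t) : 1 ≤ t ^ 2 := by nlinarith

lemma three_le_of_cube {b : ℝ} (hb : 0 ≤ b) (h : 27 ≤ b ^ 3) : 3 ≤ b := by
  nlinarith [sq_nonneg (b - 3), sq_nonneg (b + 3)]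

lemma csineq (x0 x1 x2 s0 s1 s2 : ℝ) :
    (x0*s0 + x1*s1 + x2*s2) ^ 2 ≤ (x0^2+x1^2+x2^2) * (s0^2+s1^2+s2^2) := by
  nlinarith [sq_nonneg (x0*s1 - x1*s0), sq_nonneg (x1*s2 - x2*s1), sq_nonneg (x0*s2 - x2*s0)]

lemma cross_le_sq (s0 s1 s2 : ℝ) : s0*s1 + s1*s2 + s2*s0 ≤ s0^2+s1^2+s2^2 := by
  nlinarith [sq_nonneg (s0 - s1), sq_nonneg (s1 - s2), sq_nonneg (s2 - s0)]

lemma le_quarter {R : ℝ} (h0 : 0 ≤ R) (h : R ^ 2 ≤ 2/75) : R ≤ 1/4 := by nlinarith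

lemma le_one_of_sq {t : ℝ} (h0 : 0 ≤ t) (h : t ^ 2 ≤ 1) : t ≤ 1 := by nlinarith

lemma exp_two_le : Real.exp 2 ≤ 7.3890562 := by
  have he : Real.exp 1 < 2.7182818286 := Real.exp_one_lt_d9
  have hp : (0:ℝ) < Real.exp 1 := Real.exp_pos 1
  have h4 : Real.exp 2 = Real.exp 1 * Real.exp 1 := by
    rw [← Real.exp_add]; norm_num
  rw [h4]; nlinarith

lemma exp_upper_aux {u V : ℝ} (hV0 : 0 ≤ V) (hu : u ^ 2 ≤ V ^ 2) (hV : V ≤ 1/4) :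
    Real.exp (2*u) - 1 - 2*u ≤ 3 * u ^ 2 := by
  obtain ⟨l, r⟩ := abs_le_of_sq_le_sq' hu hV0
  have h2u : |2*u| ≤ 1 := by rw [abs_le]; constructor <;> nlinarith
  have ht := exp_taylor2 h2u
  rw [abs_le] at ht
  nlinarith [ht.2]

lemma quart_bound {R B2 : ℝ} (hR : 0 ≤ R) (hB3 : 3 ≤ B2) (hsm : R^2 * B2 ≤ 2/25) :
    4*(R^2)*(1+1.5*R)^2 * (B2 - 3) + 9*(R^2)^2*B2 ≤ (53/10) * (R^2) * B2 := by
  rcases le_or_gt (18*R^2 + 12*R) (13/10) with hA | hB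
  · have h1 : 0 ≤ (R^2 * B2) * (13/10 - 12*R - 18*R^2) :=
      mul_nonneg (mul_nonneg (sq_nonneg R) (by linarith)) (by linarith)
    nlinarith [h1, sq_nonneg (R*(1+1.5*R))]
  · have h1 : (R^2*B2) * (18*R^2 + 12*R - 13/10) ≤ (2/25) * (18*R^2 + 12*R - 13/10) :=
      mul_le_mul_of_nonneg_right hsm (by linarith)
    have hq4 : 0 ≤ 27*R^4 + 36*R^3 + (264/25)*R^2 - (24/25)*R + 13/125 := by
      nlinarith [sq_nonneg (R - 1/22), mul_nonneg (mul_nonneg hR hR) hR, sq_nonneg (R*R)]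
    nlinarith [h1, hq4]

/-- Core real-variable inequality. -/
theorem core_bound (x0 x1 x2 s0 s1 s2 : ℝ) (hx : x0 + x1 + x2 = 0)
    (hs0 : 0 ≤ s0) (hs1 : 0 ≤ s1) (hs2 : 0 ≤ s2) (hprod : 1 ≤ s0 * s1 * s2) :
    (Real.exp (-(Real.pi * ((Real.exp (2*x0) - 1) * s0 + (Real.exp (2*x1) - 1) * s1 + (Real.exp (2*x2) - 1) * s2))) - 1)
    + (Real.exp (-(Real.pi * ((Real.exp (2*x0) - 1) * s1 + (Real.exp (2*x1) - 1) * s2 + (Real.exp (2*x2) - 1) * s0))) - 1)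
    + (Real.exp (-(Real.pi * ((Real.exp (2*x0) - 1) * s2 + (Real.exp (2*x1) - 1) * s0 + (Real.exp (2*x2) - 1) * s1))) - 1)
    ≤ 4 * Real.pi ^ 2 * (x0^2+x1^2+x2^2) * (s0^2+s1^2+s2^2)
      + 2 * Real.pi ^ 2 * (x0^2+x1^2+x2^2) * (s0^2+s1^2+s2^2) *
        Real.exp (2 * Real.pi * Real.sqrt (x0^2+x1^2+x2^2) * Real.sqrt (s0^2+s1^2+s2^2)) := by
  have hπ : (3.141592:ℝ) < Real.pi := Real.pi_gt_d6
  have hπ' : Real.pi < 3.141593 := Real.pi_lt_d6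
  have hπ0 : (0:ℝ) < Real.pi := by linarith
  obtain ⟨a0, ha0⟩ : ∃ t, t = Real.exp (2*x0) - 1 := ⟨_, rfl⟩
  obtain ⟨a1, ha1⟩ : ∃ t, t = Real.exp (2*x1) - 1 := ⟨_, rfl⟩
  obtain ⟨a2, ha2⟩ : ∃ t, t = Real.exp (2*x2) - 1 := ⟨_, rfl⟩
  obtain ⟨W2, hW2d⟩ : ∃ t, t = x0^2+x1^2+x2^2 := ⟨_, rfl⟩
  obtain ⟨B2, hB2d⟩ : ∃ t, t = s0^2+s1^2+s2^2 := ⟨_, rfl⟩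
  rw [← ha0, ← ha1, ← ha2, ← hW2d, ← hB2d]
  obtain ⟨R, hRd⟩ : ∃ t, t = Real.sqrt W2 := ⟨_, rfl⟩
  obtain ⟨Q, hQd⟩ : ∃ t, t = Real.sqrt B2 := ⟨_, rfl⟩
  rw [← hRd, ← hQd]
  obtain ⟨X, hXd⟩ : ∃ t, t = Real.exp (2 * Real.pi * R * Q) := ⟨_, rfl⟩
  rw [← hXd]
  obtain ⟨D0, hD0⟩ : ∃ t, t = a0 * s0 + a1 * s1 + a2 * s2 := ⟨_, rfl⟩
  obtain ⟨D1, hD1⟩ : ∃ t, t = a0 * s1 + a1 * s2 + a2 * s0 := ⟨_, rfl⟩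
  obtain ⟨D2, hD2⟩ : ∃ t, t = a0 * s2 + a1 * s0 + a2 * s1 := ⟨_, rfl⟩
  rw [← hD0, ← hD1, ← hD2]
  -- basic facts
  have hW2nn : 0 ≤ W2 := by rw [hW2d]; positivity
  have hB2nn : 0 ≤ B2 := by rw [hB2d]; positivity
  have hRnn : 0 ≤ R := by rw [hRd]; exact Real.sqrt_nonneg _
  have hQnn : 0 ≤ Q := by rw [hQd]; exact Real.sqrt_nonneg _
  have hR2 : R ^ 2 = W2 := by rw [hRd]; exact Real.sq_sqrt hW2nn
  have hQ2 : Q ^ 2 = B2 := by rw [hQd]; exact Real.sq_sqrt hB2nn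
  have hXpos : 0 < X := by rw [hXd]; exact Real.exp_pos _
  have hWBnn : 0 ≤ W2 * B2 := mul_nonneg hW2nn hB2nn
  have hv2 : (R * Q) ^ 2 = W2 * B2 := by rw [mul_pow, hR2, hQ2]
  have hvnn : 0 ≤ R * Q := mul_nonneg hRnn hQnn
  -- B2 ≥ 3 and C ≥ 3
  have hp2 : 1 ≤ (s0 * s1 * s2) ^ 2 := one_le_sq hprod
  have hB23 : 3 ≤ B2 := by
    have h27 := amgm3 (sq_nonneg s0) (sq_nonneg s1) (sq_nonneg s2)
    rw [← hB2d] at h27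
    exact three_le_of_cube hB2nn (by linarith only [h27, hp2])
  obtain ⟨C, hCd⟩ : ∃ t, t = s0*s1 + s1*s2 + s2*s0 := ⟨_, rfl⟩
  have hCnn : 0 ≤ C := by
    rw [hCd]; positivity
  have hC3 : 3 ≤ C := by
    have h27 := amgm3 (mul_nonneg hs0 hs1) (mul_nonneg hs1 hs2) (mul_nonneg hs2 hs0)
    rw [← hCd] at h27
    exact three_le_of_cube hCnn (by linarith only [h27, hp2])
  have hCB : C ≤ B2 := by
    rw [hCd, hB2d]; exact cross_le_sq s0 s1 s2
  -- a_j ≥ 2 x_j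
  have ha0ge : 2 * x0 ≤ a0 := by
    have := Real.add_one_le_exp (2*x0); rw [ha0]; linarith
  have ha1ge : 2 * x1 ≤ a1 := by
    have := Real.add_one_le_exp (2*x1); rw [ha1]; linarith
  have ha2ge : 2 * x2 ≤ a2 := by
    have := Real.add_one_le_exp (2*x2); rw [ha2]; linarith
  have hEnn : 0 ≤ a0 + a1 + a2 := by linarith
  have hSnn : 0 ≤ s0 + s1 + s2 := by linarith
  have hsumD : 0 ≤ D0 + D1 + D2 := by
    have h : D0 + D1 + D2 = (a0 + a1 + a2) * (s0 + s1 + s2) := by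
      rw [hD0, hD1, hD2]; ring
    rw [h]; exact mul_nonneg hEnn hSnn
  -- Cauchy-Schwarz lower bounds for D_k
  have hcs0 : (x0*s0 + x1*s1 + x2*s2) ^ 2 ≤ W2 * B2 := by
    rw [hW2d, hB2d]; exact csineq x0 x1 x2 s0 s1 s2
  have hcs1 : (x0*s1 + x1*s2 + x2*s0) ^ 2 ≤ W2 * B2 := by
    rw [hW2d, hB2d]
    exact le_of_le_of_eq (csineq x0 x1 x2 s1 s2 s0) (by ring)
  have hcs2 : (x0*s2 + x1*s0 + x2*s1) ^ 2 ≤ W2 * B2 := by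
    rw [hW2d, hB2d]
    exact le_of_le_of_eq (csineq x0 x1 x2 s2 s0 s1) (by ring)
  have hneg : ∀ q : ℝ, q ^ 2 ≤ W2 * B2 → -(R*Q) ≤ q := by
    intro q hq
    have h : q ^ 2 ≤ (R*Q) ^ 2 := by rw [hv2]; exact hq
    exact (abs_le_of_sq_le_sq' h hvnn).1
  have hD0ge : -(2*(R*Q)) ≤ D0 := by
    have h := hneg _ hcs0
    have e0 : (2*x0)*s0 ≤ a0*s0 := mul_le_mul_of_nonneg_right ha0ge hs0
    have e1 : (2*x1)*s1 ≤ a1*s1 := mul_le_mul_of_nonneg_right ha1ge hs1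
    have e2 : (2*x2)*s2 ≤ a2*s2 := mul_le_mul_of_nonneg_right ha2ge hs2
    rw [hD0]; linarith [h, e0, e1, e2]
  have hD1ge : -(2*(R*Q)) ≤ D1 := by
    have h := hneg _ hcs1
    have e0 : (2*x0)*s1 ≤ a0*s1 := mul_le_mul_of_nonneg_right ha0ge hs1
    have e1 : (2*x1)*s2 ≤ a1*s2 := mul_le_mul_of_nonneg_right ha1ge hs2
    have e2 : (2*x2)*s0 ≤ a2*s0 := mul_le_mul_of_nonneg_right ha2ge hs0
    rw [hD1]; linarith [h, e0, e1, e2]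
  have hD2ge : -(2*(R*Q)) ≤ D2 := by
    have h := hneg _ hcs2
    have e0 : (2*x0)*s2 ≤ a0*s2 := mul_le_mul_of_nonneg_right ha0ge hs2
    have e1 : (2*x1)*s0 ≤ a1*s0 := mul_le_mul_of_nonneg_right ha1ge hs0
    have e2 : (2*x2)*s1 ≤ a2*s1 := mul_le_mul_of_nonneg_right ha2ge hs1
    rw [hD2]; linarith [h, e0, e1, e2]
  have hmnn : 0 ≤ 2 * Real.pi * R * Q := by
    have := mul_nonneg (mul_nonneg (by linarith : (0:ℝ) ≤ 2 * Real.pi) hRnn) hQnn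
    linarith
  have hXge1 : 1 ≤ X := by rw [hXd]; exact Real.one_le_exp hmnn
  have hexpm : ∀ D : ℝ, -(2*(R*Q)) ≤ D → -(Real.pi * D) ≤ 2 * Real.pi * R * Q := by
    intro D hD
    have h := mul_le_mul_of_nonneg_left (show -D ≤ 2*(R*Q) by linarith) hπ0.le
    linarith [h]
  by_cases hsmall : W2 * B2 ≤ 2/25
  · -- SMALL CASE
    have hrem : ∀ D : ℝ, -(2*(R*Q)) ≤ D →
        Real.exp (-(Real.pi * D)) - 1 ≤ -(Real.pi * D) + (Real.pi * D) ^ 2 / 2 * X := by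
      intro D hD
      have h := exp_remainder_le (t := Real.pi * D) hmnn (hexpm D hD)
      rw [← hXd] at h
      linarith
    have h0 := hrem D0 hD0ge
    have h1 := hrem D1 hD1ge
    have h2 := hrem D2 hD2ge
    have hW275 : W2 ≤ 2/75 := by
      have := mul_le_mul_of_nonneg_left hB23 hW2nn
      linarith [this, hsmall]
    have hRle : R ≤ 1/4 := le_quarter hRnn (by rw [hR2]; exact hW275)
    have hx0W : x0 ^ 2 ≤ R ^ 2 := by
      rw [hR2, hW2d]; linarith [sq_nonneg x1, sq_nonneg x2]
    have hx1W : x1 ^ 2 ≤ R ^ 2 := by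
      rw [hR2, hW2d]; linarith [sq_nonneg x0, sq_nonneg x2]
    have hx2W : x2 ^ 2 ≤ R ^ 2 := by
      rw [hR2, hW2d]; linarith [sq_nonneg x0, sq_nonneg x1]
    have hA2 : a0^2 + a1^2 + a2^2 ≤ 4 * W2 * (1 + 1.5*R)^2 := by
      have b0 := sq_exp_aux hRnn hx0W hRle
      have b1 := sq_exp_aux hRnn hx1W hRle
      have b2 := sq_exp_aux hRnn hx2W hRle
      rw [← ha0] at b0; rw [← ha1] at b1; rw [← ha2] at b2
      have e : 4*x0^2*(1+1.5*R)^2 + 4*x1^2*(1+1.5*R)^2 + 4*x2^2*(1+1.5*R)^2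
          = 4 * W2 * (1+1.5*R)^2 := by rw [hW2d]; ring
      linarith [b0, b1, b2, e.le, e.ge]
    have hE3 : a0 + a1 + a2 ≤ 3 * W2 := by
      have b0 := exp_upper_aux hRnn hx0W hRle
      have b1 := exp_upper_aux hRnn hx1W hRle
      have b2 := exp_upper_aux hRnn hx2W hRle
      rw [← ha0] at b0; rw [← ha1] at b1; rw [← ha2] at b2
      have e : 3*x0^2 + 3*x1^2 + 3*x2^2 = 3 * W2 := by rw [hW2d]; ring
      linarith [b0, b1, b2, e.le, e.ge]
    have hident : D0^2 + D1^2 + D2^2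
        = (a0^2+a1^2+a2^2) * (B2 - C) + (a0+a1+a2)^2 * C := by
      rw [hD0, hD1, hD2, hB2d, hCd]; ring
    have hA2nn : 0 ≤ a0^2+a1^2+a2^2 := by positivity
    have hstep : D0^2 + D1^2 + D2^2 ≤ 4*W2*(1+1.5*R)^2 * (B2 - 3) + 9*W2^2*B2 := by
      have t1 : (a0^2+a1^2+a2^2) * (B2 - C) ≤ (a0^2+a1^2+a2^2) * (B2 - 3) :=
        mul_le_mul_of_nonneg_left (by linarith) hA2nn
      have t2 : (a0^2+a1^2+a2^2) * (B2 - 3) ≤ 4*W2*(1+1.5*R)^2 * (B2 - 3) :=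
        mul_le_mul_of_nonneg_right hA2 (by linarith)
      have t3 : (a0+a1+a2)^2 ≤ 9 * W2^2 := by
        have := pow_le_pow_left₀ hEnn hE3 2
        linarith [this]
      have t4 : (a0+a1+a2)^2 * C ≤ 9*W2^2 * B2 :=
        mul_le_mul t3 hCB hCnn (by positivity)
      linarith [hident.le, t1, t2, t4]
    have hquart : 4*W2*(1+1.5*R)^2 * (B2 - 3) + 9*W2^2*B2 ≤ (53/10) * W2 * B2 := by
      rw [← hR2]
      exact quart_bound hRnn hB23 (by rw [hR2]; exact hsmall)
    have hDD : D0^2 + D1^2 + D2^2 ≤ (53/10) * W2 * B2 := le_trans hstep hquart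
    -- X ≤ 5.93
    have hvle : R * Q ≤ 28285/100000 := by
      linarith [hv2.le, hv2.ge, hsmall, sq_nonneg (R*Q - 28285/100000), hvnn]
    have hXle : X ≤ 593/100 := by
      have harg : 2 * Real.pi * R * Q ≤ 17773/10000 := by
        have := mul_le_mul hπ'.le hvle hvnn (by norm_num : (0:ℝ) ≤ 3.141593)
        linarith [this]
      have h1 : X ≤ Real.exp (17773/10000) := by
        rw [hXd]; exact Real.exp_le_exp.mpr harg
      have h2 : Real.exp (17773/10000) = Real.exp 2 * Real.exp (-(2227/10000)) := by
        rw [← Real.exp_add]; norm_num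
      have h4 : Real.exp (-(2227/10000)) ≤ 1 - 2227/10000 + (2227/10000)^2/2 :=
        exp_neg_le_quadratic (by norm_num)
      have h5 : Real.exp (-(2227/10000)) ≤ 0.8021 := by linarith
      calc X ≤ Real.exp (17773/10000) := h1
      _ = Real.exp 2 * Real.exp (-(2227/10000)) := h2
      _ ≤ 7.3890562 * 0.8021 :=
          mul_le_mul exp_two_le h5 (Real.exp_pos _).le (by norm_num)
      _ ≤ 593/100 := by norm_num
    -- assemble
    have hsum1 : Real.exp (-(Real.pi * D0)) - 1 + (Real.exp (-(Real.pi * D1)) - 1)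
        + (Real.exp (-(Real.pi * D2)) - 1)
        ≤ Real.pi^2/2 * X * (D0^2 + D1^2 + D2^2) := by
      have e : -(Real.pi*D0) + (Real.pi*D0)^2/2*X + (-(Real.pi*D1) + (Real.pi*D1)^2/2*X)
          + (-(Real.pi*D2) + (Real.pi*D2)^2/2*X)
          = -(Real.pi * (D0+D1+D2)) + Real.pi^2/2 * X * (D0^2+D1^2+D2^2) := by ring
      have hnp : -(Real.pi * (D0+D1+D2)) ≤ 0 := by
        have := mul_nonneg hπ0.le hsumD
        linarith
      linarith [h0, h1, h2, e.le, e.ge, hnp]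
    have hstep2 : Real.pi^2/2 * X * (D0^2 + D1^2 + D2^2)
        ≤ Real.pi^2/2 * X * ((53/10) * W2 * B2) :=
      mul_le_mul_of_nonneg_left hDD
        (mul_nonneg (by positivity) hXpos.le)
    have hstep3 : Real.pi^2/2 * X * ((53/10) * W2 * B2)
        ≤ 4*Real.pi^2*W2*B2 + 2*Real.pi^2*W2*B2*X := by
      have hkey : (0:ℝ) ≤ 4 - (13/20) * X := by linarith
      have hh := mul_nonneg (mul_nonneg (sq_nonneg Real.pi) hWBnn) hkey
      linarith only [hh]
    linarith [hsum1, hstep2, hstep3]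
  · -- TRIVIAL CASE
    push_neg at hsmall
    have htriv : ∀ D : ℝ, -(2*(R*Q)) ≤ D → Real.exp (-(Real.pi * D)) - 1 ≤ X - 1 := by
      intro D hD
      have h : Real.exp (-(Real.pi*D)) ≤ X := by
        rw [hXd]; exact Real.exp_le_exp.mpr (hexpm D hD)
      linarith
    have hpos : ∀ D : ℝ, 0 ≤ D → Real.exp (-(Real.pi * D)) - 1 ≤ 0 := by
      intro D hD
      have hh : -(Real.pi * D) ≤ 0 := by
        have := mul_nonneg hπ0.le hD
        linarith
      have h : Real.exp (-(Real.pi*D)) ≤ 1 := Real.exp_le_one_iff.mpr hh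
      linarith
    have ht0 := htriv D0 hD0ge
    have ht1 := htriv D1 hD1ge
    have ht2 := htriv D2 hD2ge
    have hmain : 2 * (X - 1) ≤ 4*Real.pi^2*W2*B2 + 2*Real.pi^2*W2*B2*X := by
      have hq : Real.pi^2 * (2/25) ≤ Real.pi^2 * (W2*B2) :=
        mul_le_mul_of_nonneg_left hsmall.le (sq_nonneg Real.pi)
      have hq0 : (789/1000:ℝ) ≤ Real.pi^2 * (W2*B2) := by
        have hsq := sq_nonneg (Real.pi - 3.141592)
        linarith only [hq, hsq, hπ]
      rcases le_or_gt 1 (Real.pi^2 * (W2*B2)) with hq1 | hq1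
      · have hh := mul_nonneg (sub_nonneg.2 hq1) (by linarith : (0:ℝ) ≤ X)
        linarith only [hh, hq0]
      · have hX2 : X ≤ 7.3890562 := by
          have hπv : Real.pi * (R*Q) ≤ 1 := by
            apply le_one_of_sq (mul_nonneg hπ0.le hvnn)
            have e : (Real.pi*(R*Q))^2 = Real.pi^2 * (W2*B2) := by
              rw [mul_pow, hv2]
            linarith [e.le, e.ge]
          have harg : 2 * Real.pi * R * Q ≤ 2 := by linarith [hπv]
          have h1 : X ≤ Real.exp 2 := by rw [hXd]; exact Real.exp_le_exp.mpr harg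
          linarith [exp_two_le]
        have hh := mul_nonneg (sub_nonneg.2 hq1.le) (sub_nonneg.2 hX2)
        linarith only [hh, hq0]
    rcases le_or_gt 0 D0 with hd | hd0
    · have := hpos D0 hd; linarith [ht1, ht2, hmain]
    rcases le_or_gt 0 D1 with hd | hd1
    · have := hpos D1 hd; linarith [ht0, ht2, hmain]
    rcases le_or_gt 0 D2 with hd | hd2
    · have := hpos D2 hd; linarith [ht0, ht1, hmain]
    linarith [hsumD]

lemma sum_sq_le_sq_sum {t0 t1 t2 : ℝ} (h0 : 0 ≤ t0) (h1 : 0 ≤ t1) (h2 : 0 ≤ t2) :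
    t0^2 + t1^2 + t2^2 ≤ (t0 + t1 + t2)^2 := by
  nlinarith [mul_nonneg h0 h1, mul_nonneg h1 h2, mul_nonneg h0 h2]

lemma nine_le_exp_quarter {N : ℝ} (h : 9 ≤ N) : N ≤ Real.exp (N/4) := by
  have h0 : (0:ℝ) ≤ N/4 := by linarith
  have hs := Real.sum_le_exp_of_nonneg h0 6
  rw [Finset.sum_range_succ, Finset.sum_range_succ, Finset.sum_range_succ,
    Finset.sum_range_succ, Finset.sum_range_succ, Finset.sum_range_succ,
    Finset.sum_range_zero] at hs
  norm_num [Nat.factorial] at hs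
  nlinarith [sq_nonneg (N - 9), mul_nonneg (sub_nonneg.2 h) (sq_nonneg (N-9)),
    sq_nonneg ((N-9)^2), mul_nonneg (mul_nonneg (sub_nonneg.2 h) (sub_nonneg.2 h)) (sub_nonneg.2 h)]

lemma exp_sq_eq (a : ℝ) : Real.exp a ^ 2 = Real.exp (2*a) := by
  rw [sq, ← Real.exp_add]; congr 1; ring

lemma rhs_compare {N B2 W : ℝ} (h9 : 9 ≤ N) (hB2nn : 0 ≤ B2) (hB2N : B2 ≤ N^2) (hWnn : 0 ≤ W) :
    4*Real.pi^2*B2*Real.exp (-Real.pi*N) * (1 + (1/2)*Real.exp (2*Real.pi*W*Real.sqrt B2)) ≤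
    4*Real.pi^2*(Real.exp (-(Real.pi-1/2)*N) + (1/2)*Real.exp (-(Real.pi*(1-2*W-1/(2*Real.pi)))*N)) := by
  have hπ0 : (0:ℝ) < Real.pi := Real.pi_pos
  have hN0 : (0:ℝ) ≤ N := by linarith
  have hBN : Real.sqrt B2 ≤ N := by
    have h := Real.sqrt_le_sqrt hB2N
    rwa [Real.sqrt_sq hN0] at h
  have hN2 : N^2 ≤ Real.exp (N/2) := by
    have h1 := nine_le_exp_quarter h9
    calc N^2 ≤ (Real.exp (N/4))^2 := by
          have := pow_le_pow_left₀ hN0 h1 2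
          linarith [this]
    _ = Real.exp (N/2) := by rw [exp_sq_eq]; congr 1; ring
  have t1 : B2 * Real.exp (-Real.pi*N) ≤ Real.exp (-(Real.pi-1/2)*N) := by
    calc B2 * Real.exp (-Real.pi*N) ≤ Real.exp (N/2) * Real.exp (-Real.pi*N) := by
          apply mul_le_mul_of_nonneg_right _ (Real.exp_pos _).le
          calc B2 ≤ N^2 := hB2N
          _ ≤ Real.exp (N/2) := hN2
    _ = Real.exp (-(Real.pi-1/2)*N) := by rw [← Real.exp_add]; congr 1; ring
  have hXle : Real.exp (2*Real.pi*W*Real.sqrt B2) ≤ Real.exp (2*Real.pi*W*N) := by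
    apply Real.exp_le_exp.mpr
    apply mul_le_mul_of_nonneg_left hBN
    positivity
  have t2 : B2 * Real.exp (-Real.pi*N) * Real.exp (2*Real.pi*W*Real.sqrt B2)
      ≤ Real.exp (-(Real.pi*(1-2*W-1/(2*Real.pi)))*N) := by
    calc B2 * Real.exp (-Real.pi*N) * Real.exp (2*Real.pi*W*Real.sqrt B2)
        ≤ Real.exp (N/2) * Real.exp (-Real.pi*N) * Real.exp (2*Real.pi*W*N) := by
          apply mul_le_mul (mul_le_mul_of_nonneg_right (hB2N.trans hN2) (Real.exp_pos _).le)
            hXle (Real.exp_pos _).le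
          positivity
    _ = Real.exp (N/2 + -Real.pi*N + 2*Real.pi*W*N) := by
          rw [← Real.exp_add, ← Real.exp_add]
    _ = Real.exp (-(Real.pi*(1-2*W-1/(2*Real.pi)))*N) := by
          congr 1
          field_simp
          ring
  have c1 := mul_le_mul_of_nonneg_left t1 (by positivity : (0:ℝ) ≤ 4*Real.pi^2)
  have c2 := mul_le_mul_of_nonneg_left t2 (by positivity : (0:ℝ) ≤ 2*Real.pi^2)
  nlinarith [c1, c2]

/-- Taylor-expansion upper bounds for `G(u,f)`, where `u = (e^x, e^y, e^z)`,
`x + y + z = 0` and `w = (−x,−y,−z) ≠ 0`.  Here `‖f²‖² = f₀⁴ + f₁⁴ + f₂⁴ = fnorm2 (f²)`. -/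
theorem Gfun_taylor_bound
    {F : Type*} [Field F] [NumberField F] [IsGalois ℚ F]
    (h3 : Module.finrank ℚ F = 3)
    (σ : F ≃ₐ[ℚ] F) (hσ : ∀ τ : F ≃ₐ[ℚ] F, τ ∈ Subgroup.zpowers σ)
    (ι : F →+* ℝ)
    (x y z : ℝ) (hxyz : x + y + z = 0) (hw : 0 < x ^ 2 + y ^ 2 + z ^ 2)
    (f : 𝓞 F) :
    Gfun σ ι x y z (f : F) ≤
      4 * Real.pi ^ 2 * fnorm2 σ ι ((f : F) ^ 2) * Real.exp (-Real.pi * fnorm2 σ ι (f : F)) *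
        (1 + (1/2) * Real.exp (2 * Real.pi * Real.sqrt (x ^ 2 + y ^ 2 + z ^ 2) *
          Real.sqrt (fnorm2 σ ι ((f : F) ^ 2)))) ∧
    (9 ≤ fnorm2 σ ι (f : F) →
      Gfun σ ι x y z (f : F) ≤
        4 * Real.pi ^ 2 *
          (Real.exp (-(Real.pi - 1/2) * fnorm2 σ ι (f : F)) +
            (1/2) * Real.exp (-(Real.pi * (1 - 2 * Real.sqrt (x ^ 2 + y ^ 2 + z ^ 2) -
              1 / (2 * Real.pi))) * fnorm2 σ ι (f : F)))) := by
  have hπ0 : (0:ℝ) < Real.pi := Real.pi_pos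
  -- Galois group facts
  have hcard : Fintype.card (F ≃ₐ[ℚ] F) = 3 := by
    rw [← Nat.card_eq_fintype_card, IsGalois.card_aut_eq_finrank]; exact h3
  have horder : orderOf σ = 3 := by
    rw [orderOf_eq_card_of_forall_mem_zpowers hσ, Nat.card_eq_fintype_card, hcard]
  have hσpow : σ ^ 3 = 1 := by rw [← horder]; exact pow_orderOf_eq_one σ
  have hσ3 : ∀ g : F, σ (σ (σ g)) = g := by
    intro g
    have h1 : (σ ^ 3) g = g := by rw [hσpow]; rfl
    rw [pow_succ, pow_succ, pow_one] at h1
    simpa [AlgEquiv.mul_apply] using h1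
  classical
  rcases eq_or_ne (f : F) 0 with hf | hf
  · -- f = 0
    have hz : ∀ g : F, g = 0 → fnorm2 σ ι g = 0 := by
      intro g hg; simp [fnorm2, hg]
    have hfn : fnorm2 σ ι (f:F) = 0 := hz _ hf
    have hfn2 : fnorm2 σ ι ((f:F)^2) = 0 := hz _ (by rw [hf]; ring)
    have hG2z : G2 σ ι ![Real.exp x, Real.exp y, Real.exp z] (f:F) = 0 := by
      simp [G2, G1, unorm2, fnorm2, hf]
    have hGf : Gfun σ ι x y z (f:F) = 0 := by
      rw [Gfun, hG2z]; simp
    constructor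
    · rw [hGf, hfn2]; simp
    · intro h9; rw [hfn] at h9; norm_num at h9
  · -- f ≠ 0
    set e0 := ι (f : F) with he0
    set e1 := ι (σ (f : F)) with he1
    set e2 := ι (σ (σ (f : F))) with he2
    -- norm product ≥ 1
    have hprod : 1 ≤ e0^2 * e1^2 * e2^2 := by
      have hne1 : σ ≠ 1 := by
        intro h; rw [h, orderOf_one] at horder; norm_num at horder
      have hne2 : σ * σ ≠ 1 := by
        intro h
        have h2 : σ ^ 2 = 1 := by rw [pow_two]; exact h
        have hd := orderOf_dvd_of_pow_eq_one h2
        rw [horder] at hd; norm_num at hd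
      have hne3 : σ * σ ≠ σ := by
        intro h
        apply hne1
        have := mul_left_cancel (a := σ) (b := σ) (c := 1) (by rw [mul_one]; exact h)
        exact this
      have hmem2 : σ ∉ ({σ * σ} : Finset (F ≃ₐ[ℚ] F)) := by
        simp only [Finset.mem_singleton]
        exact fun h => hne3 h.symm
      have hmem1 : (1 : F ≃ₐ[ℚ] F) ∉ ({σ, σ * σ} : Finset (F ≃ₐ[ℚ] F)) := by
        simp only [Finset.mem_insert, Finset.mem_singleton]
        push_neg
        exact ⟨fun h => hne1 h.symm, fun h => hne2 h.symm⟩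
      have huniv : (Finset.univ : Finset (F ≃ₐ[ℚ] F)) = {1, σ, σ * σ} := by
        symm
        apply Finset.eq_univ_of_card
        rw [Finset.card_insert_of_notMem hmem1, Finset.card_insert_of_notMem hmem2,
          Finset.card_singleton, hcard]
      have hnormeq := Algebra.norm_eq_prod_automorphisms (K := ℚ) (f : F)
      rw [huniv, Finset.prod_insert hmem1, Finset.prod_insert hmem2,
        Finset.prod_singleton] at hnormeq
      simp only [AlgEquiv.one_apply, AlgEquiv.mul_apply] at hnormeq
      -- hnormeq : algebraMap ℚ F (norm ℚ f) = f * (σ f * σ (σ f))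
      set q : ℚ := Algebra.norm ℚ (f : F) with hq
      have hcomp : ι ((algebraMap ℚ F) q) = (q : ℝ) := by
        have h := eq_ratCast (ι.comp (algebraMap ℚ F)) q
        simpa using h
      have hqval : (q : ℝ) = e0 * (e1 * e2) := by
        have h := congrArg ι hnormeq
        rw [map_mul, map_mul, hcomp] at h
        rw [h, ← he0, ← he1, ← he2]
      have hint : IsIntegral ℤ q := by
        apply Algebra.isIntegral_norm (K := ℚ)
        exact NumberField.RingOfIntegers.isIntegral_coe f
      obtain ⟨n, hn⟩ := IsIntegrallyClosed.isIntegral_iff.mp hint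
      have hq0 : q ≠ 0 := by
        rw [hq]
        exact (Algebra.norm_ne_zero_iff).mpr hf
      have hn0 : n ≠ 0 := by
        intro h; apply hq0; rw [← hn, h]; simp
      have hn1 : (1:ℝ) ≤ (n:ℝ)^2 := by
        have : 1 ≤ n^2 := by
          rcases lt_or_gt_of_ne hn0 with h | h
          · nlinarith
          · nlinarith
        exact_mod_cast this
      have hqn : (q:ℝ) = (n:ℝ) := by
        rw [← hn]; simp [algebraMap_int_eq]
      calc (1:ℝ) ≤ (n:ℝ)^2 := hn1
      _ = (q:ℝ)^2 := by rw [hqn]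
      _ = (e0 * (e1 * e2))^2 := by rw [hqval]
      _ = e0^2 * e1^2 * e2^2 := by ring
    -- apply core lemma
    have hcore := core_bound x y z (e0^2) (e1^2) (e2^2) hxyz (sq_nonneg _) (sq_nonneg _)
      (sq_nonneg _) hprod
    have he2x : Real.exp x ^ 2 = Real.exp (2*x) := exp_sq_eq x
    have he2y : Real.exp y ^ 2 = Real.exp (2*y) := exp_sq_eq y
    have he2z : Real.exp z ^ 2 = Real.exp (2*z) := exp_sq_eq z
    have hval0 : unorm2 σ ι ![Real.exp x, Real.exp y, Real.exp z] (f:F) - fnorm2 σ ι (f:F)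
        = (Real.exp (2*x) - 1) * e0^2 + (Real.exp (2*y) - 1) * e1^2
          + (Real.exp (2*z) - 1) * e2^2 := by
      simp only [unorm2, fnorm2, Matrix.cons_val_zero, Matrix.cons_val_one, Matrix.head_cons,
        Matrix.cons_val_two, Matrix.tail_cons]
      rw [← he0, ← he1, ← he2, he2x, he2y, he2z]; ring
    have hval1 : unorm2 σ ι ![Real.exp x, Real.exp y, Real.exp z] (σ (f:F))
          - fnorm2 σ ι (σ (f:F))
        = (Real.exp (2*x) - 1) * e1^2 + (Real.exp (2*y) - 1) * e2^2
          + (Real.exp (2*z) - 1) * e0^2 := by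
      simp only [unorm2, fnorm2, Matrix.cons_val_zero, Matrix.cons_val_one, Matrix.head_cons,
        Matrix.cons_val_two, Matrix.tail_cons, hσ3]
      rw [← he0, ← he1, ← he2, he2x, he2y, he2z]; ring
    have hval2 : unorm2 σ ι ![Real.exp x, Real.exp y, Real.exp z] (σ (σ (f:F)))
          - fnorm2 σ ι (σ (σ (f:F)))
        = (Real.exp (2*x) - 1) * e2^2 + (Real.exp (2*y) - 1) * e0^2
          + (Real.exp (2*z) - 1) * e1^2 := by
      simp only [unorm2, fnorm2, Matrix.cons_val_zero, Matrix.cons_val_one, Matrix.head_cons,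
        Matrix.cons_val_two, Matrix.tail_cons, hσ3]
      rw [← he0, ← he1, ← he2, he2x, he2y, he2z]; ring
    have hG2eq : G2 σ ι ![Real.exp x, Real.exp y, Real.exp z] (f:F)
        = (Real.exp (-(Real.pi * ((Real.exp (2*x) - 1) * e0^2 + (Real.exp (2*y) - 1) * e1^2 + (Real.exp (2*z) - 1) * e2^2))) - 1)
        + (Real.exp (-(Real.pi * ((Real.exp (2*x) - 1) * e1^2 + (Real.exp (2*y) - 1) * e2^2 + (Real.exp (2*z) - 1) * e0^2))) - 1)
        + (Real.exp (-(Real.pi * ((Real.exp (2*x) - 1) * e2^2 + (Real.exp (2*y) - 1) * e0^2 + (Real.exp (2*z) - 1) * e1^2))) - 1) := by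
      simp only [G2, G1, hval0, hval1, hval2, neg_mul]
    have hB2eq : fnorm2 σ ι ((f:F)^2) = (e0^2)^2 + (e1^2)^2 + (e2^2)^2 := by
      simp only [fnorm2, map_pow, ← he0, ← he1, ← he2]
    have hNeq : fnorm2 σ ι (f:F) = e0^2 + e1^2 + e2^2 := by
      simp only [fnorm2, ← he0, ← he1, ← he2]
    have hG2le : G2 σ ι ![Real.exp x, Real.exp y, Real.exp z] (f:F)
        ≤ 4 * Real.pi ^ 2 * (x^2+y^2+z^2) * fnorm2 σ ι ((f:F)^2)
          + 2 * Real.pi ^ 2 * (x^2+y^2+z^2) * fnorm2 σ ι ((f:F)^2) *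
            Real.exp (2 * Real.pi * Real.sqrt (x^2+y^2+z^2)
              * Real.sqrt (fnorm2 σ ι ((f:F)^2))) := by
      rw [hG2eq, hB2eq]
      exact hcore
    have hpart1 : Gfun σ ι x y z (f : F) ≤
        4 * Real.pi ^ 2 * fnorm2 σ ι ((f : F) ^ 2) * Real.exp (-Real.pi * fnorm2 σ ι (f : F)) *
        (1 + (1/2) * Real.exp (2 * Real.pi * Real.sqrt (x ^ 2 + y ^ 2 + z ^ 2) *
          Real.sqrt (fnorm2 σ ι ((f : F) ^ 2)))) := by
      rw [Gfun, div_le_iff₀ hw]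
      calc Real.exp (-Real.pi * fnorm2 σ ι (f:F))
            * G2 σ ι ![Real.exp x, Real.exp y, Real.exp z] (f:F)
          ≤ Real.exp (-Real.pi * fnorm2 σ ι (f:F)) *
            (4 * Real.pi ^ 2 * (x^2+y^2+z^2) * fnorm2 σ ι ((f:F)^2)
            + 2 * Real.pi ^ 2 * (x^2+y^2+z^2) * fnorm2 σ ι ((f:F)^2) *
              Real.exp (2 * Real.pi * Real.sqrt (x^2+y^2+z^2)
                * Real.sqrt (fnorm2 σ ι ((f:F)^2)))) :=
            mul_le_mul_of_nonneg_left hG2le (Real.exp_pos _).le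
      _ = 4 * Real.pi ^ 2 * fnorm2 σ ι ((f : F) ^ 2)
            * Real.exp (-Real.pi * fnorm2 σ ι (f : F)) *
            (1 + (1/2) * Real.exp (2 * Real.pi * Real.sqrt (x ^ 2 + y ^ 2 + z ^ 2) *
              Real.sqrt (fnorm2 σ ι ((f : F) ^ 2)))) * (x ^ 2 + y ^ 2 + z ^ 2) := by ring
    refine ⟨hpart1, fun h9 => le_trans hpart1 ?_⟩
    have hB2nn : 0 ≤ fnorm2 σ ι ((f:F)^2) := by rw [hB2eq]; positivity
    have hB2N : fnorm2 σ ι ((f:F)^2) ≤ (fnorm2 σ ι (f:F))^2 := by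
      rw [hB2eq, hNeq]
      exact sum_sq_le_sq_sum (sq_nonneg e0) (sq_nonneg e1) (sq_nonneg e2)
    exact rhs_compare h9 hB2nn hB2N (Real.sqrt_nonneg _)
end

section
/- Let F be a cyclic cubic field and let u = (e^x, e^y, e^z) with x + y + z = 0 and 0 < ‖w‖² = x² + y² + z² < 0.170856². Then T₁(u) = G(u,1) + G(u,−1) = 2G(u,1) ≤ −0.002652393, where explicitly G(u,1) = 3 e^{−3π}( e^{−π(e^{2x} + e^{2y} + e^{2z} − 3)} − 1 )/‖w‖². -/
set_option maxHeartbeats 2000000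


open NumberField
open scoped nonZeroDivisors

lemma sum5 (t : ℝ) : ∑ m ∈ Finset.range 5, t ^ m / (Nat.factorial m) = 1 + t + t^2/2 + t^3/6 + t^4/24 := by
  norm_num [Finset.sum_range_succ, Nat.factorial]

lemma exp_ge_poly {t : ℝ} (ht : |t| ≤ 1) :
    1 + t + t^2/2 + t^3/6 + t^4/24 - |t|^5/100 ≤ Real.exp t := by
  have h := Real.exp_bound ht (n := 5) (by norm_num)
  rw [sum5] at h
  rw [abs_sub_le_iff] at h
  have h2 := h.2
  norm_num [Nat.factorial] at h2
  nlinarith [h2, abs_nonneg t]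

lemma exp_le_poly {t : ℝ} (ht : |t| ≤ 1) :
    Real.exp t ≤ 1 + t + t^2/2 + t^3/6 + t^4/24 + |t|^5/100 := by
  have h := Real.exp_bound ht (n := 5) (by norm_num)
  rw [sum5] at h
  rw [abs_sub_le_iff] at h
  have h1 := h.1
  norm_num [Nat.factorial] at h1
  nlinarith [h1, abs_nonneg t]

lemma exp_two_mul_ge {t : ℝ} (ht : t ^ 2 ≤ 0.170856 ^ 2) :
    1 + 2*t + 2*t^2 + (4/3)*t^3 ≤ Real.exp (2*t) := by
  have habs : |2*t| ≤ 1 := by rw [abs_le]; constructor <;> nlinarith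
  have h := exp_ge_poly habs
  have h1 : |2*t| ≤ 0.342 := by rw [abs_le]; constructor <;> nlinarith
  have h4 : |2*t|^5 ≤ 0.342 * (2*t)^4 := by
    calc |2*t|^5 = |2*t| * |2*t|^4 := by ring
    _ = |2*t| * (2*t)^4 := by
        rw [← abs_pow, abs_of_nonneg (by positivity : (0:ℝ) ≤ (2*t)^4)]
    _ ≤ 0.342 * (2*t)^4 := mul_le_mul_of_nonneg_right h1 (by positivity)
  nlinarith [h, h4, sq_nonneg t, sq_nonneg (t*t)]

lemma exp_sq (t : ℝ) : Real.exp t ^ 2 = Real.exp (2*t) := by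
  rw [two_mul, Real.exp_add, sq]

private lemma core (x y z : ℝ) (hxyz : x + y + z = 0)
    (hw0 : 0 < x ^ 2 + y ^ 2 + z ^ 2) (hw1 : x ^ 2 + y ^ 2 + z ^ 2 < 0.170856 ^ 2) :
    2 * (Real.exp (-Real.pi * 3) *
      (3 * (Real.exp (-Real.pi * ((Real.exp x ^ 2 + Real.exp y ^ 2 + Real.exp z ^ 2) - 3)) - 1)) /
      (x ^ 2 + y ^ 2 + z ^ 2)) ≤ -0.002652393 := by
  set r : ℝ := x ^ 2 + y ^ 2 + z ^ 2 with hrdef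
  -- each square is small
  have hx2 : x ^ 2 ≤ 0.170856 ^ 2 := by nlinarith [sq_nonneg y, sq_nonneg z]
  have hy2 : y ^ 2 ≤ 0.170856 ^ 2 := by nlinarith [sq_nonneg x, sq_nonneg z]
  have hz2 : z ^ 2 ≤ 0.170856 ^ 2 := by nlinarith [sq_nonneg x, sq_nonneg y]
  -- cubic bound on xyz
  have h54 : 54 * (x*y*z)^2 ≤ r^3 := by
    have hz : z = -x - y := by linarith
    rw [hrdef, hz]
    nlinarith [sq_nonneg ((x-y)*(x+2*y)*(2*x+y))]
  have hr3 : r^3 ≤ 0.170856^2 * r^2 := by nlinarith [sq_nonneg r]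
  have hK : -(0.0930031) * r ≤ 4*(x*y*z) := by
    nlinarith [h54, hr3, sq_nonneg (4*(x*y*z) + 0.0930031*r), hw0, mul_pos hw0 hw0, sq_nonneg (x*y*z)]
  -- lower bound for S
  have hxyz3 : x^3 + y^3 + z^3 = 3*(x*y*z) := by
    have hz : z = -x - y := by linarith
    rw [hz]; ring
  have hS : 3 + 1.9069969 * r ≤ Real.exp (2*x) + Real.exp (2*y) + Real.exp (2*z) := by
    have h1 := exp_two_mul_ge hx2
    have h2 := exp_two_mul_ge hy2
    have h3 := exp_two_mul_ge hz2
    nlinarith [h1, h2, h3, hK, hxyz3, hxyz]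
  simp only [exp_sq] at *
  set u := Real.pi * (1.9069969 * r) with hudef
  have hLr : (0:ℝ) ≤ 1.9069969 * r := by nlinarith
  have hu0 : 0 ≤ u := by rw [hudef]; positivity
  have hup : u ≤ 3.141593 * (1.9069969 * r) :=
    mul_le_mul_of_nonneg_right Real.pi_lt_d6.le hLr
  have huq : 3.141592 * (1.9069969 * r) ≤ u :=
    mul_le_mul_of_nonneg_right Real.pi_gt_d6.le hLr
  have hu1 : u ≤ 1 := by nlinarith [hup, hw1, hw0]
  have hE : Real.exp (-Real.pi * (Real.exp (2*x) + Real.exp (2*y) + Real.exp (2*z) - 3)) ≤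
      Real.exp (-u) := by
    apply Real.exp_le_exp.mpr
    rw [hudef]
    nlinarith [hS, Real.pi_pos]
  have hE2 : Real.exp (-u) ≤ 1 - u + u^2/2 - u^3/6 + u^4/24 + u^5/100 := by
    have habs : |(-u)| ≤ 1 := by rwa [abs_neg, abs_of_nonneg hu0]
    have h := exp_le_poly habs
    rw [abs_neg, abs_of_nonneg hu0] at h
    nlinarith [h]
  have hA2 : u^2 ≤ (3.141593*(1.9069969*r))^2 := pow_le_pow_left₀ hu0 hup 2
  have hA4 : u^4 ≤ (3.141593*(1.9069969*r))^4 := pow_le_pow_left₀ hu0 hup 4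
  have hA5 : u^5 ≤ (3.141593*(1.9069969*r))^5 := pow_le_pow_left₀ hu0 hup 5
  have hB3 : (3.141592*(1.9069969*r))^3 ≤ u^3 := pow_le_pow_left₀ (by positivity) huq 3
  have hsub : (0:ℝ) ≤ 0.170856^2 - r := by linarith
  have hpoly : - (3.141592*(1.9069969*r)) + (3.141593*(1.9069969*r))^2/2
      - (3.141592*(1.9069969*r))^3/6 + (3.141593*(1.9069969*r))^4/24
      + (3.141593*(1.9069969*r))^5/100 ≤ -(0.002652393*2066)*r := by
    nlinarith [hsub, hw0.le, mul_nonneg hsub hsub, mul_nonneg hsub hw0.le,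
      mul_nonneg (mul_nonneg hsub hw0.le) hw0.le,
      mul_nonneg (mul_nonneg (mul_nonneg hsub hw0.le) hw0.le) hw0.le,
      mul_nonneg (mul_nonneg hsub hsub) hw0.le]
  have hN : Real.exp (-u) - 1 ≤ -(0.002652393*2066) * r := by
    linarith [hE2, hA2, hA4, hA5, hB3, hpoly, huq]
  have hexp3 : Real.exp (3*3.141593) ≤ 12396 := by
    have hs : (3*3.141593 : ℝ) = (64:ℕ) * (9.424779/64) := by norm_num
    rw [hs, Real.exp_nat_mul]
    have habs : |(9.424779/64 : ℝ)| ≤ 1 := by rw [abs_of_nonneg] <;> norm_num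
    have h := exp_le_poly habs
    rw [abs_of_nonneg (by norm_num : (0:ℝ) ≤ 9.424779/64)] at h
    calc Real.exp (9.424779/64) ^ 64
        ≤ (1 + 9.424779/64 + (9.424779/64)^2/2 + (9.424779/64)^3/6 + (9.424779/64)^4/24
            + (9.424779/64)^5/100)^64 := pow_le_pow_left₀ (Real.exp_pos _).le h 64
      _ ≤ 12396 := by norm_num
  have h3pi : Real.exp (Real.pi*3) ≤ 12396 :=
    le_trans (Real.exp_le_exp.mpr (by nlinarith [Real.pi_lt_d6])) hexp3
  have hinv : (1/12396 : ℝ) ≤ Real.exp (-Real.pi*3) := by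
    rw [show -Real.pi*3 = -(Real.pi*3) by ring, Real.exp_neg, one_div]
    exact inv_anti₀ (Real.exp_pos _) h3pi
  set E := Real.exp (-Real.pi * (Real.exp (2*x) + Real.exp (2*y) + Real.exp (2*z) - 3)) with hEdef
  have hEN : E - 1 ≤ -(0.002652393*2066)*r := by linarith [hE, hN]
  have hENneg : E - 1 ≤ 0 := by nlinarith [hEN, hw0]
  have key : Real.exp (-Real.pi*3) * (E - 1) ≤ (1/12396) * (-(0.002652393*2066)*r) :=
    le_trans (mul_le_mul_of_nonpos_right hinv hENneg)
      (mul_le_mul_of_nonneg_left hEN (by norm_num))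
  have h2 : Real.exp (-Real.pi*3) * (3*(E-1)) / r ≤ -2652393e-9/2 := by
    rw [div_le_iff₀ hw0]
    nlinarith [key]
  linarith [h2]


/-- The bound `T₁(u) = G(u,1) + G(u,−1) ≤ −0.002652393` for `u = (e^x,e^y,e^z)` with
`x + y + z = 0` and `0 < ‖w‖² < 0.170856²`. -/
theorem T1_bound
    {F : Type*} [Field F] [NumberField F] [IsGalois ℚ F]
    (h3 : Module.finrank ℚ F = 3)
    (σ : F ≃ₐ[ℚ] F) (hσ : ∀ τ : F ≃ₐ[ℚ] F, τ ∈ Subgroup.zpowers σ)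
    (ι : F →+* ℝ)
    (x y z : ℝ) (hxyz : x + y + z = 0)
    (hw0 : 0 < x ^ 2 + y ^ 2 + z ^ 2) (hw1 : x ^ 2 + y ^ 2 + z ^ 2 < 0.170856 ^ 2) :
    Gfun σ ι x y z 1 + Gfun σ ι x y z (-1) ≤ -0.002652393 := by
  have hc := core x y z hxyz hw0 hw1
  have heq : Gfun σ ι x y z 1 + Gfun σ ι x y z (-1) =
      2 * (Real.exp (-Real.pi * 3) *
        (3 * (Real.exp (-Real.pi * ((Real.exp x ^ 2 + Real.exp y ^ 2 + Real.exp z ^ 2) - 3)) - 1)) /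
        (x ^ 2 + y ^ 2 + z ^ 2)) := by
    simp [Gfun, G2, G1, unorm2, fnorm2, Matrix.cons_val_zero, Matrix.cons_val_one,
      Matrix.head_cons, Matrix.cons_val_two, Matrix.tail_cons]
    ring_nf
  rw [heq]
  exact hc
end

section
/- For all real numbers x, y, z with x + y + z = 0 and 0 < x² + y² + z² < 0.170856², one has e^{2x} + e^{2y} + e^{2z} − 3 ≥ 1.9·(x² + y² + z²). -/
lemma cubic_le_exp {t : ℝ} (ht : |t| ≤ 1) :
    1 + t + t ^ 2 / 2 + t ^ 3 / 6 ≤ Real.exp t := by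
  have h := Real.exp_bound ht (n := 5) (by norm_num)
  have hs : ∑ m ∈ Finset.range 5, t ^ m / m.factorial
      = 1 + t + t ^ 2 / 2 + t ^ 3 / 6 + t ^ 4 / 24 := by
    norm_num [Finset.sum_range_succ, Nat.factorial]
  rw [hs] at h
  have h2 := (abs_sub_le_iff.1 h).2
  have ha : |t| ^ 5 ≤ t ^ 4 := by
    calc |t| ^ 5 ≤ |t| ^ 4 := pow_le_pow_of_le_one (abs_nonneg t) ht (by norm_num)
    _ = t ^ 4 := by rw [← abs_pow, abs_of_nonneg (by positivity)]
  norm_num [Nat.factorial] at h2 ⊢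
  nlinarith [h2, ha]

/-- For real `x, y, z` with `x + y + z = 0` and `0 < x² + y² + z² < 0.170856²`, one has
`e^{2x} + e^{2y} + e^{2z} − 3 ≥ 1.9(x² + y² + z²)`. -/
theorem exp_sum_sub_three_ge
    (x y z : ℝ) (hxyz : x + y + z = 0)
    (hw0 : 0 < x ^ 2 + y ^ 2 + z ^ 2) (hw1 : x ^ 2 + y ^ 2 + z ^ 2 < 0.170856 ^ 2) :
    1.9 * (x ^ 2 + y ^ 2 + z ^ 2) ≤
      Real.exp (2 * x) + Real.exp (2 * y) + Real.exp (2 * z) - 3 := by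
  have hx2 : x ^ 2 < 0.170856 ^ 2 := by nlinarith [sq_nonneg y, sq_nonneg z]
  have hy2 : y ^ 2 < 0.170856 ^ 2 := by nlinarith [sq_nonneg x, sq_nonneg z]
  have hz2 : z ^ 2 < 0.170856 ^ 2 := by nlinarith [sq_nonneg x, sq_nonneg y]
  have habs : ∀ t : ℝ, t ^ 2 < 0.170856 ^ 2 → |2 * t| ≤ 1 := by
    intro t h
    rw [abs_le]
    constructor <;> nlinarith
  have ex := cubic_le_exp (habs x hx2)
  have ey := cubic_le_exp (habs y hy2)
  have ez := cubic_le_exp (habs z hz2)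
  -- key polynomial fact: 54 x²y²z² ≤ S³ when x+y+z=0
  have hz' : z = -x - y := by linarith
  subst hz'
  have hkey : 54 * (x * y * (-x - y)) ^ 2 ≤ (x ^ 2 + y ^ 2 + (-x - y) ^ 2) ^ 3 := by
    nlinarith [sq_nonneg (x - y), sq_nonneg (x + 2*y), sq_nonneg (2*x + y), sq_nonneg (x*y), sq_nonneg ((x-y)*(x+2*y)*(2*x+y)), sq_nonneg (x+y)]
  nlinarith [ex, ey, ez, hkey, hw0, hw1, sq_nonneg (x ^ 2 + y ^ 2 + (-x-y) ^ 2), mul_pos hw0 hw0]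
end
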